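/- arXiv:1008.0999 — 4 statements merged into one kernel-verified Lean document; each statement's English description precedes it below -/
import Mathlib

section
/- The kernel of the natural map r : Q^×/(Q^×)^4 → Q(i)^×/(Q(i)^×)^4 induced by the inclusion Q ⊆ Q(i) has order 2 and is generated by the class of -4. -/
open IntermediateField in
/-- The field `ℚ(i)` of Gaussian rationals, realized as a subfield of `ℂ`. -/
noncomputable abbrev GaussQ : IntermediateField ℚ ℂ := ℚ⟮Complex.I⟯

/-- The natural map `ℚ^×/(ℚ^×)⁴ → ℚ(i)^×/(ℚ(i)^×)⁴` induced by the
inclusion `ℚ ⊆ ℚ(i)`. -/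
noncomputable def rMap :
    (ℚˣ ⧸ (powMonoidHom 4 : ℚˣ →* ℚˣ).range) →*
      (GaussQˣ ⧸ (powMonoidHom 4 : GaussQˣ →* GaussQˣ).range) :=
  QuotientGroup.map _ _ (Units.map (algebraMap ℚ GaussQ).toMonoidHom)
    (by
      rintro x ⟨y, rfl⟩
      exact ⟨Units.map (algebraMap ℚ GaussQ).toMonoidHom y, by
        simp [powMonoidHom, ← map_pow]⟩)

open Complex Polynomial

lemma I_integral : IsIntegral ℚ Complex.I :=
  ⟨X^2 + 1, by monicity!, by simp⟩

lemma mem_gauss {z : ℂ} (hz : z ∈ GaussQ) : ∃ a b : ℚ, z = a + b * Complex.I := by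
  have h1 : GaussQ.toSubalgebra = Algebra.adjoin ℚ {Complex.I} :=
    IntermediateField.adjoin_simple_toSubalgebra_of_isAlgebraic I_integral.isAlgebraic
  have h2 : z ∈ Algebra.adjoin ℚ {Complex.I} := h1 ▸ hz
  rw [Algebra.adjoin_singleton_eq_range_aeval] at h2
  obtain ⟨p, hp⟩ := h2
  have hm : (X^2 + 1 : ℚ[X]).Monic := by monicity!
  have hdvd : z = aeval Complex.I (p %ₘ (X^2+1)) := by
    conv_lhs => rw [← hp]
    conv_lhs => rw [← Polynomial.modByMonic_add_div p (X^2+1)]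
    simp [map_add, map_mul]
  set r := p %ₘ (X^2+1) with hr
  have hdeg : r.degree ≤ 1 := by
    have h3 := Polynomial.degree_modByMonic_lt p hm
    rw [show (X^2+1:ℚ[X]).degree = 2 from by compute_degree!] at h3
    exact Order.lt_succ_iff.mp (by exact_mod_cast h3)
  refine ⟨r.coeff 0, r.coeff 1, ?_⟩
  rw [hdvd]
  conv_lhs => rw [Polynomial.eq_X_add_C_of_degree_le_one hdeg]
  simp only [map_add, map_mul, aeval_C, aeval_X, eq_ratCast]
  ring

lemma key {a b q : ℚ} (h : (q:ℂ) = ((a:ℂ) + b * Complex.I)^4) :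
    (∃ c : ℚ, q = c^4) ∨ (∃ c : ℚ, q = -4 * c^4) := by
  have hexp : ((a:ℂ) + b * Complex.I)^4
      = ((a^4 - 6*a^2*b^2 + b^4 : ℚ) : ℂ) + ((4*a^3*b - 4*a*b^3 : ℚ) : ℂ) * Complex.I := by
    push_cast
    linear_combination ((6:ℂ)*a^2*b^2 + 4*a*b^3*Complex.I + b^4*(Complex.I^2-1)) * Complex.I_sq
  rw [hexp] at h
  have him : (0:ℝ) = ((4*a^3*b - 4*a*b^3 : ℚ) : ℝ) := by
    have := congrArg Complex.im h
    simpa only [Complex.add_im, Complex.mul_im, Complex.ratCast_im, Complex.ratCast_re,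
      Complex.I_im, Complex.I_re, mul_zero, mul_one, zero_add, add_zero, zero_mul] using this
  have hre : (q:ℝ) = ((a^4 - 6*a^2*b^2 + b^4 : ℚ) : ℝ) := by
    have := congrArg Complex.re h
    simpa only [Complex.add_re, Complex.mul_re, Complex.ratCast_im, Complex.ratCast_re,
      Complex.I_im, Complex.I_re, mul_zero, mul_one, zero_mul, sub_zero, add_zero, zero_sub, sub_neg_eq_add, zero_add] using this
  have hS : 4*a*b*(a-b)*(a+b) = 0 := by
    have : (4*a^3*b - 4*a*b^3 : ℚ) = 0 := by exact_mod_cast him.symm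
    linear_combination this
  have hq : q = a^4 - 6*a^2*b^2 + b^4 := by exact_mod_cast hre
  rcases mul_eq_zero.mp hS with h1 | hab
  · rcases mul_eq_zero.mp h1 with h2 | hamb
    · rcases mul_eq_zero.mp h2 with h3 | hb
      · have : a = 0 := by linarith
        exact Or.inl ⟨b, by rw [hq, this]; ring⟩
      · exact Or.inl ⟨a, by rw [hq, hb]; ring⟩
    · have : a = b := by linarith
      exact Or.inr ⟨a, by rw [hq, ← this]; ring⟩
  · have : a = -b := by linarith
    exact Or.inr ⟨b, by rw [hq, this]; ring⟩

lemma hmem_onePlusI : (1 : ℂ) + Complex.I ∈ GaussQ :=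
  add_mem (one_mem _) (IntermediateField.mem_adjoin_simple_self ℚ Complex.I)

noncomputable def vUnit : GaussQˣ :=
  Units.mk0 ⟨(1:ℂ) + Complex.I, hmem_onePlusI⟩
    (by
      intro h
      have := congrArg (Subtype.val) h
      simp only [ZeroMemClass.coe_zero] at this
      have := congrArg Complex.re this
      simp at this)

lemma neg4_mem_ker :
    (QuotientGroup.mk (Units.mk0 (-4 : ℚ) (by norm_num)) :
      ℚˣ ⧸ (powMonoidHom 4 : ℚˣ →* ℚˣ).range) ∈ rMap.ker := by
  rw [MonoidHom.mem_ker]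
  show QuotientGroup.mk _ = 1
  rw [QuotientGroup.eq_one_iff]
  refine ⟨vUnit, ?_⟩
  ext
  show ((vUnit : GaussQ) : ℂ)^4 = ((algebraMap ℚ GaussQ (-4) : GaussQ) : ℂ)
  have h2 : ((algebraMap ℚ GaussQ (-4) : GaussQ) : ℂ) = ((-4 : ℚ) : ℂ) := rfl
  rw [h2]
  show ((1:ℂ) + Complex.I)^4 = _
  push_cast
  linear_combination (Complex.I^2 + 4*Complex.I + 5) * Complex.I_sq

/-- The kernel of the natural map `r : ℚ^×/(ℚ^×)⁴ → ℚ(i)^×/(ℚ(i)^×)⁴` has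
order `2` and is generated by the class of `-4`. -/
theorem stmt_1 :
    rMap.ker =
      Subgroup.closure {QuotientGroup.mk (Units.mk0 (-4 : ℚ) (by norm_num))} ∧
    Nat.card rMap.ker = 2 := by
  set c : ℚˣ ⧸ (powMonoidHom 4 : ℚˣ →* ℚˣ).range :=
    QuotientGroup.mk (Units.mk0 (-4 : ℚ) (by norm_num)) with hc
  have hker : rMap.ker = Subgroup.closure {c} := by
    apply le_antisymm
    · intro x hx
      induction x using QuotientGroup.induction_on with
      | H u =>
      rw [MonoidHom.mem_ker] at hx
      have hx' : (QuotientGroup.mk (Units.map (algebraMap ℚ GaussQ).toMonoidHom u)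
          : GaussQˣ ⧸ (powMonoidHom 4 : GaussQˣ →* GaussQˣ).range) = 1 := hx
      rw [QuotientGroup.eq_one_iff] at hx'
      obtain ⟨w, hw⟩ := hx'
      have hval : ((w : GaussQ) : ℂ)^4 = ((u : ℚ) : ℂ) := by
        have := congrArg (fun t : GaussQˣ => ((t : GaussQ) : ℂ)) hw
        simpa [powMonoidHom] using this
      obtain ⟨a, b, hab⟩ := mem_gauss (SetLike.coe_mem (w : GaussQ))
      have hk := key (a := a) (b := b) (q := (u : ℚ)) (by rw [← hab, hval])
      have hu0 : (u : ℚ) ≠ 0 := u.ne_zero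
      rcases hk with ⟨d, hd⟩ | ⟨d, hd⟩
      · have hd0 : d ≠ 0 := by rintro rfl; simp at hd
        have : (QuotientGroup.mk u : ℚˣ ⧸ (powMonoidHom 4 : ℚˣ →* ℚˣ).range) = 1 := by
          rw [QuotientGroup.eq_one_iff]
          exact ⟨Units.mk0 d hd0, Units.ext (by simp [powMonoidHom, ← hd])⟩
        rw [this]; exact one_mem _
      · have hd0 : d ≠ 0 := by rintro rfl; simp at hd
        have hu : u = Units.mk0 (-4 : ℚ) (by norm_num) * (Units.mk0 d hd0)^4 :=
          Units.ext (by simp [hd])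
        have : (QuotientGroup.mk u : ℚˣ ⧸ (powMonoidHom 4 : ℚˣ →* ℚˣ).range) = c := by
          rw [hu, QuotientGroup.mk_mul]
          have h1 : (QuotientGroup.mk ((Units.mk0 d hd0)^4)
              : ℚˣ ⧸ (powMonoidHom 4 : ℚˣ →* ℚˣ).range) = 1 :=
            (QuotientGroup.eq_one_iff _).mpr ⟨Units.mk0 d hd0, rfl⟩
          rw [h1, mul_one, hc]
        rw [this]
        exact Subgroup.subset_closure rfl
    · rw [Subgroup.closure_le]
      intro y hy
      rw [Set.mem_singleton_iff.mp hy]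
      exact neg4_mem_ker
  have hc2 : c^2 = 1 := by
    rw [hc]
    show QuotientGroup.mk _ = 1
    rw [QuotientGroup.eq_one_iff]
    exact ⟨Units.mk0 (2:ℚ) two_ne_zero, Units.ext (by norm_num [powMonoidHom])⟩
  have hc1 : c ≠ 1 := by
    intro h
    rw [hc, QuotientGroup.eq_one_iff] at h
    obtain ⟨y, hy⟩ := h
    have hy' : ((y : ℚ))^4 = -4 := by
      have := congrArg (fun t : ℚˣ => (t : ℚ)) hy
      simpa [powMonoidHom] using this
    have : (0:ℚ) ≤ ((y:ℚ))^4 := Even.pow_nonneg (by decide) _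
    rw [hy'] at this; norm_num at this
  have horder : orderOf c = 2 := orderOf_eq_prime hc2 hc1
  refine ⟨hker, ?_⟩
  rw [hker, ← Subgroup.zpowers_eq_closure, Nat.card_zpowers, horder]
end

section
/- If p ≥ 37 is a prime, then any smooth plane diagonal quartic curve a·x^4 + b·y^4 + c·z^4 = 0 with a, b, c ∈ F_p^× has a nonzero F_p-rational point. -/
open Finset Polynomial

/-- Glue lemma: scale a witness for class representatives to the general equation. -/
lemma glue_aux {p : ℕ} [Fact p.Prime] {B C r1 r2 s t x0 y0 : ZMod p} (hs : s ≠ 0)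
    (hB : B = r1 * s ^ 4) (hC : C = r2 * t ^ 4) (h0 : x0 ^ 4 + r1 * y0 ^ 4 + r2 = 0) :
    ∃ x y : ZMod p, x ^ 4 + B * y ^ 4 + C = 0 := by
  refine ⟨t * x0, t * s⁻¹ * y0, ?_⟩
  have hs4 : s ^ 4 * (s⁻¹) ^ 4 = 1 := by
    field_simp
  subst hB hC
  ring_nf
  ring_nf at h0 hs4
  linear_combination t ^ 4 * h0 + r1 * t ^ 4 * y0 ^ 4 * hs4

lemma D1_37 : ∀ B : ZMod 37, B ≠ 0 → ∃ r s : ZMod 37,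
    (r = 1 ∨ r = 2 ∨ r = 4 ∨ r = 8) ∧ s ≠ 0 ∧ B = r * s ^ 4 := by decide

lemma D2_37 : ∀ r1 r2 : ZMod 37, (r1 = 1 ∨ r1 = 2 ∨ r1 = 4 ∨ r1 = 8) →
    (r2 = 1 ∨ r2 = 2 ∨ r2 = 4 ∨ r2 = 8) →
    ∃ x y : ZMod 37, x ^ 4 + r1 * y ^ 4 + r2 = 0 := by decide

lemma case37 (a b c : ZMod 37) (ha : a ≠ 0) (hb : b ≠ 0) (hc : c ≠ 0) :
    ∃ x y : ZMod 37, a * x ^ 4 + b * y ^ 4 + c = 0 := by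
  haveI : Fact (Nat.Prime 37) := ⟨by norm_num⟩
  have D1 := D1_37
  have D2 := D2_37
  obtain ⟨r1, s, hr1, hs, hB⟩ := D1 (b * a⁻¹) (mul_ne_zero hb (inv_ne_zero ha))
  obtain ⟨r2, t, hr2, ht, hC⟩ := D1 (c * a⁻¹) (mul_ne_zero hc (inv_ne_zero ha))
  obtain ⟨x0, y0, h0⟩ := D2 r1 r2 hr1 hr2
  obtain ⟨x, y, hxy⟩ := glue_aux hs hB hC h0
  refine ⟨x, y, ?_⟩
  field_simp at hxy
  linear_combination hxy

set_option maxRecDepth 4000 in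
lemma D1_41 : ∀ B : ZMod 41, B ≠ 0 → ∃ r s : ZMod 41,
    (r = 1 ∨ r = 6 ∨ r = 36 ∨ r = 11) ∧ s ≠ 0 ∧ B = r * s ^ 4 := by decide

lemma D2_41 : ∀ r1 r2 : ZMod 41, (r1 = 1 ∨ r1 = 6 ∨ r1 = 36 ∨ r1 = 11) →
    (r2 = 1 ∨ r2 = 6 ∨ r2 = 36 ∨ r2 = 11) →
    ∃ x y : ZMod 41, x ^ 4 + r1 * y ^ 4 + r2 = 0 := by decide

lemma case41 (a b c : ZMod 41) (ha : a ≠ 0) (hb : b ≠ 0) (hc : c ≠ 0) :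
    ∃ x y : ZMod 41, a * x ^ 4 + b * y ^ 4 + c = 0 := by
  haveI : Fact (Nat.Prime 41) := ⟨by norm_num⟩
  obtain ⟨r1, s, hr1, hs, hB⟩ := D1_41 (b * a⁻¹) (mul_ne_zero hb (inv_ne_zero ha))
  obtain ⟨r2, t, hr2, ht, hC⟩ := D1_41 (c * a⁻¹) (mul_ne_zero hc (inv_ne_zero ha))
  obtain ⟨x0, y0, h0⟩ := D2_41 r1 r2 hr1 hr2
  obtain ⟨x, y, hxy⟩ := glue_aux hs hB hC h0
  refine ⟨x, y, ?_⟩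
  field_simp at hxy
  linear_combination hxy

/-- In `ZMod p` with `p % 4 = 3`, every square is a fourth power. -/
lemma sq_is_fourth {p : ℕ} [Fact p.Prime] (hp4 : p % 4 = 3) (u : ZMod p) :
    ∃ x : ZMod p, x ^ 4 = u ^ 2 := by
  classical
  by_cases hu : IsSquare u
  · obtain ⟨s, hs⟩ := hu
    exact ⟨s, by rw [hs]; ring⟩
  · have hu0 : u ≠ 0 := fun h => hu ⟨0, by simp [h]⟩
    have hcard : Fintype.card (ZMod p) % 4 = 3 := by rwa [ZMod.card]
    have hn1 : ¬ IsSquare (-1 : ZMod p) := by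
      rw [FiniteField.isSquare_neg_one_iff]
      simp [ZMod.card, hp4]
    have hsq : IsSquare (-u) := by
      have h1 : quadraticChar (ZMod p) u = -1 :=
        quadraticChar_neg_one_iff_not_isSquare.mpr hu
      have h2 : quadraticChar (ZMod p) (-1 : ZMod p) = -1 :=
        quadraticChar_neg_one_iff_not_isSquare.mpr hn1
      have h3 : quadraticChar (ZMod p) (-u) = 1 := by
        have : (-u : ZMod p) = -1 * u := by ring
        rw [this, map_mul, h1, h2]; ring
      exact (quadraticChar_one_iff_isSquare (neg_ne_zero.mpr hu0)).mp h3
    obtain ⟨s, hs⟩ := hsq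
    refine ⟨s, ?_⟩
    have : s * s = -u := hs.symm
    calc s ^ 4 = (s * s) ^ 2 := by ring
    _ = (-u) ^ 2 := by rw [this]
    _ = u ^ 2 := by ring

lemma case3mod4 {p : ℕ} [Fact p.Prime] (hp4 : p % 4 = 3) (a b c : ZMod p)
    (ha : a ≠ 0) (hb : b ≠ 0) (hc : c ≠ 0) :
    ∃ x y : ZMod p, a * x ^ 4 + b * y ^ 4 + c = 0 := by
  classical
  have hodd : Fintype.card (ZMod p) % 2 = 1 := by
    rw [ZMod.card]; omega
  have h1 : (C a * X ^ 2 : (ZMod p)[X]).degree = 2 := by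
    simpa using degree_C_mul_X_pow 2 ha
  have hf2 : (C a * X ^ 2 + C c : (ZMod p)[X]).degree = 2 := by
    rw [degree_add_eq_left_of_degree_lt, h1]
    rw [h1]
    exact lt_of_le_of_lt degree_C_le (by norm_num)
  have hg2 : (C b * X ^ 2 : (ZMod p)[X]).degree = 2 := by
    simpa using degree_C_mul_X_pow 2 hb
  obtain ⟨u, v, huv⟩ := FiniteField.exists_root_sum_quadratic hf2 hg2 hodd
  simp only [eval_add, eval_mul, eval_pow, eval_C, eval_X] at huv
  obtain ⟨x, hx⟩ := sq_is_fourth hp4 u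
  obtain ⟨y, hy⟩ := sq_is_fourth hp4 v
  exact ⟨x, y, by rw [hx, hy]; linear_combination huv⟩

open Finset Polynomial

section Quartic

variable {p : ℕ} [Fact p.Prime]

/-- There is a primitive 4th root of unity in `ZMod p` when `4 ∣ p - 1`. -/
lemma exists_prim4 (hp4 : (4 : ℕ) ∣ p - 1) : ∃ ζ : ZMod p, IsPrimitiveRoot ζ 4 := by
  obtain ⟨g, hg⟩ := IsCyclic.exists_generator (α := (ZMod p)ˣ)
  have hog : orderOf g = p - 1 := by
    rw [orderOf_eq_card_of_forall_mem_zpowers hg, Nat.card_eq_fintype_card,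
      ZMod.card_units_eq_totient, Nat.totient_prime (Fact.out)]
  have hp1 : p - 1 ≠ 0 := by
    have := (Fact.out : p.Prime).one_lt
    omega
  have hdvd : (p - 1) / 4 ∣ p - 1 := Nat.div_dvd_of_dvd hp4
  have hord : orderOf (g ^ ((p - 1) / 4)) = 4 := by
    rw [orderOf_pow, hog, Nat.gcd_eq_right hdvd, Nat.div_div_self hp4 hp1]
  have hprim : IsPrimitiveRoot (g ^ ((p - 1) / 4)) 4 := by
    have h := IsPrimitiveRoot.orderOf (g ^ ((p - 1) / 4))
    rwa [hord] at h
  exact ⟨_, (IsPrimitiveRoot.coe_units_iff).mpr hprim⟩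

variable (χ : MulChar (ZMod p) ℂ) (hχ : orderOf χ = 4)

/-- For a character of order 4, `χ w = 1` implies `w` is a fourth power. -/
lemma fourth_of_ker (hχ : orderOf χ = 4) {w : ZMod p} (hw : w ≠ 0) (h1 : χ w = 1) :
    ∃ s : ZMod p, s ^ 4 = w := by
  obtain ⟨g, hg⟩ := IsCyclic.exists_generator (α := (ZMod p)ˣ)
  have h4 : χ ^ 4 = 1 := by rw [← hχ]; exact pow_orderOf_eq_one χ
  obtain ⟨k, hk⟩ : (hw.isUnit.unit) ∈ Submonoid.powers g :=
    mem_powers_iff_mem_zpowers.mpr (hg _)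
  have hpow : ∀ n : ℕ, (χ ^ n) (g : ZMod p) = (χ (g : ZMod p)) ^ n := fun n => by
    rcases Nat.eq_zero_or_pos n with h | h
    · simp [h, MulChar.one_apply g.isUnit]
    · exact MulChar.pow_apply' χ h.ne' _
  have hdvd1 : orderOf (χ (g : ZMod p)) ∣ 4 := by
    apply orderOf_dvd_of_pow_eq_one
    rw [← hpow 4, h4, MulChar.one_apply g.isUnit]
  have hdvd2 : (4 : ℕ) ∣ orderOf (χ (g : ZMod p)) := by
    rw [← hχ]
    apply orderOf_dvd_of_pow_eq_one
    apply MulChar.ext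
    intro u
    obtain ⟨m, hm⟩ : u ∈ Submonoid.powers g := mem_powers_iff_mem_zpowers.mpr (hg _)
    have : (u : ZMod p) = (g : ZMod p) ^ m := by rw [← hm]; push_cast; ring
    have hne : orderOf (χ (g : ZMod p)) ≠ 0 := by
      intro h
      rw [h] at hdvd1
      exact (by norm_num : ¬ (0:ℕ) ∣ 4) hdvd1
    rw [MulChar.one_apply u.isUnit, this, MulChar.pow_apply' _ hne, map_pow,
      ← pow_mul, mul_comm, pow_mul, pow_orderOf_eq_one, one_pow]
  have hog : orderOf (χ (g : ZMod p)) = 4 := Nat.dvd_antisymm hdvd1 hdvd2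
  have hk' : χ w = (χ (g : ZMod p)) ^ k := by
    have : (w : ZMod p) = (g : ZMod p) ^ k := by
      conv_lhs => rw [show w = ((hw.isUnit.unit : (ZMod p)ˣ) : ZMod p) from rfl, ← hk]
      push_cast; ring
    rw [this, map_pow]
  obtain ⟨m, hm⟩ : (4 : ℕ) ∣ k := by
    rw [← hog]
    apply orderOf_dvd_of_pow_eq_one
    rw [← hk', h1]
  refine ⟨(g : ZMod p) ^ m, ?_⟩
  have : (w : ZMod p) = (g : ZMod p) ^ k := by
    conv_lhs => rw [show w = ((hw.isUnit.unit : (ZMod p)ˣ) : ZMod p) from rfl, ← hk]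
    push_cast; ring
  rw [this, hm, ← pow_mul, mul_comm]

end Quartic

open Finset Polynomial

variable {p : ℕ} [Fact p.Prime]

lemma pow_apply_all (χ : MulChar (ZMod p) ℂ) {w : ZMod p} (hw : IsUnit w) (j : ℕ) :
    (χ ^ j) w = (χ w) ^ j := by
  rcases Nat.eq_zero_or_pos j with h | h
  · simp [h, MulChar.one_apply hw]
  · exact MulChar.pow_apply' χ h.ne' _

lemma quartic_count (hp4 : (4 : ℕ) ∣ p - 1) (χ : MulChar (ZMod p) ℂ) (hχ : orderOf χ = 4)
    (w : ZMod p) :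
    (((univ.filter (fun x : ZMod p => x ^ 4 = w)).card : ℕ) : ℂ)
      = (if w = 0 then 1 else 0) + ∑ j ∈ Finset.range 4, (χ ^ j) w := by
  have h4 : χ ^ 4 = 1 := by rw [← hχ]; exact pow_orderOf_eq_one χ
  by_cases hw : w = 0
  · subst hw
    have hfil : univ.filter (fun x : ZMod p => x ^ 4 = 0) = {0} := by
      ext x
      simp [pow_eq_zero_iff (by norm_num : (4:ℕ) ≠ 0)]
    rw [hfil]
    simp [MulChar.map_zero]
  · have hwu : IsUnit w := isUnit_iff_ne_zero.mpr hw
    have hrw : ∀ j ∈ Finset.range 4, (χ ^ j) w = (χ w) ^ j := fun j _ => pow_apply_all χ hwu j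
    rw [if_neg hw, zero_add, Finset.sum_congr rfl hrw]
    have hw4 : (χ w) ^ 4 = 1 := by
      rw [← pow_apply_all χ hwu 4, h4, MulChar.one_apply hwu]
    by_cases h1 : χ w = 1
    · -- count is 4
      obtain ⟨s, hs⟩ := fourth_of_ker χ hχ hw h1
      have hs0 : s ≠ 0 := by
        intro h
        rw [h] at hs
        exact hw (by simpa using hs.symm)
      obtain ⟨ζ, hζ⟩ := exists_prim4 hp4
      have himg : univ.filter (fun x : ZMod p => x ^ 4 = w)
          = (nthRootsFinset 4 (1 : ZMod p)).image (fun t => s * t) := by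
        ext x
        simp only [mem_filter, mem_univ, true_and, mem_image]
        constructor
        · intro hx
          refine ⟨s⁻¹ * x, ?_, by field_simp⟩
          rw [mem_nthRootsFinset (by norm_num)]
          have : s ^ 4 ≠ 0 := pow_ne_zero _ hs0
          field_simp
          rw [hx, hs]
        · rintro ⟨t, ht, rfl⟩
          rw [mem_nthRootsFinset (by norm_num)] at ht
          rw [mul_pow, ht, hs, mul_one]
      rw [himg, Finset.card_image_of_injective _ (mul_right_injective₀ hs0),
        hζ.card_nthRootsFinset]
      simp [h1]
    · -- count is 0
      have hfil : univ.filter (fun x : ZMod p => x ^ 4 = w) = ∅ := by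
        ext x
        simp only [mem_filter, mem_univ, true_and, Finset.notMem_empty, iff_false]
        intro hx
        have hx0 : x ≠ 0 := by
          intro h
          rw [h] at hx
          exact hw (by simpa using hx.symm)
        apply h1
        rw [← hx, map_pow, ← pow_apply_all χ hx0.isUnit 4, h4, MulChar.one_apply hx0.isUnit]
      rw [hfil, geom_sum_eq h1]
      simp [hw4]

open Finset Polynomial Complex

variable {p : ℕ} [Fact p.Prime]

lemma mulChar_norm_one (φ : MulChar (ZMod p) ℂ) {x : ZMod p} (hx : x ≠ 0) : ‖φ x‖ = 1 := by
  have h1 : (φ x) ^ (p - 1) = 1 := by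
    rw [← map_pow, ZMod.pow_card_sub_one_eq_one hx, map_one]
  exact norm_eq_one_of_pow_eq_one h1 (by have := (Fact.out : p.Prime).one_lt; omega)

lemma mulChar_norm_le_one (φ : MulChar (ZMod p) ℂ) (x : ZMod p) : ‖φ x‖ ≤ 1 := by
  by_cases hx : x = 0
  · simp [hx, MulChar.map_zero]
  · rw [mulChar_norm_one φ hx]

lemma conj_mulChar (φ : MulChar (ZMod p) ℂ) (x : ZMod p) :
    (starRingEnd ℂ) (φ x) = φ⁻¹ x := by
  rw [MulChar.inv_apply_eq_inv, Ring.inverse_eq_inv']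
  by_cases hx : x = 0
  · simp [hx, MulChar.map_zero]
  · have h := mulChar_norm_one φ hx
    have hne : φ x ≠ 0 := by
      intro h0
      rw [h0] at h
      simp at h
    field_simp
    rw [mul_comm, Complex.mul_conj]
    norm_cast
    rw [← Complex.sq_norm]
    rw [h]
    norm_num

lemma jacobi_norm {φ ψ : MulChar (ZMod p) ℂ} (hφ : φ ≠ 1) (hψ : ψ ≠ 1) (hφψ : φ * ψ ≠ 1) :
    ‖jacobiSum φ ψ‖ = Real.sqrt p := by
  have hconj : (starRingEnd ℂ) (jacobiSum φ ψ) = jacobiSum φ⁻¹ ψ⁻¹ := by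
    unfold jacobiSum
    rw [map_sum]
    exact Finset.sum_congr rfl fun x _ => by rw [map_mul, conj_mulChar, conj_mulChar]
  have hringchar : ringChar ℂ ≠ ringChar (ZMod p) := by
    rw [ringChar.eq_zero, ZMod.ringChar_zmod_n]
    exact ((Fact.out : p.Prime).pos.ne).symm ∘ Eq.symm
  have hmul : jacobiSum φ ψ * jacobiSum φ⁻¹ ψ⁻¹ = (Fintype.card (ZMod p) : ℂ) :=
    jacobiSum_mul_jacobiSum_inv hringchar hφ hψ hφψ
  rw [← hconj, Complex.mul_conj, ZMod.card] at hmul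
  have : Complex.normSq (jacobiSum φ ψ) = (p : ℝ) := by
    have := congrArg Complex.re hmul
    simpa using this
  rw [Complex.norm_def, this]

open Finset Polynomial Complex

variable {p : ℕ} [Fact p.Prime]

lemma key1 (hp43 : 43 ≤ p) (hp4 : p % 4 = 1) (a b c : ZMod p)
    (ha : a ≠ 0) (hb : b ≠ 0) (hc : c ≠ 0) :
    ∃ x y : ZMod p, a * x ^ 4 + b * y ^ 4 + c = 0 := by
  classical
  have hpp : p.Prime := Fact.out
  have hdvd : (4 : ℕ) ∣ p - 1 := ⟨(p - 1) / 4, by omega⟩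
  -- a character of order 4
  obtain ⟨χ, hχ⟩ := MulChar.exists_mulChar_orderOf (ZMod p) (R := ℂ)
    (by rw [ZMod.card]; exact hdvd) (Complex.isPrimitiveRoot_exp 4 (by norm_num))
  have h4 : χ ^ 4 = 1 := by rw [← hχ]; exact pow_orderOf_eq_one χ
  have hpow_ne : ∀ n : ℕ, ¬ (4 ∣ n) → χ ^ n ≠ 1 := by
    intro n hn h
    exact hn (hχ ▸ orderOf_dvd_of_pow_eq_one h)
  -- abbreviations
  set M : ZMod p → ℕ := fun w => #{x : ZMod p | x ^ 4 = w} with hMdef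
  set N : ℕ := #{z : ZMod p × ZMod p | a * z.1 ^ 4 + b * z.2 ^ 4 + c = 0} with hNdef
  set A : ℕ → ℂ := fun i => (χ ^ i) (-c * a⁻¹) with hAdef
  set B : ℕ → ℂ := fun j => (χ ^ j) (-c * b⁻¹) with hBdef
  set J : ℕ → ℕ → ℂ := fun i j => jacobiSum (χ ^ i) (χ ^ j) with hJdef
  have hbb : b * b⁻¹ = 1 := mul_inv_cancel₀ hb
  have haa : a * a⁻¹ = 1 := mul_inv_cancel₀ ha
  have hca : (-c * a⁻¹ : ZMod p) ≠ 0 := mul_ne_zero (neg_ne_zero.mpr hc) (inv_ne_zero ha)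
  have hcb : (-c * b⁻¹ : ZMod p) ≠ 0 := mul_ne_zero (neg_ne_zero.mpr hc) (inv_ne_zero hb)
  have hcount := quartic_count hdvd χ hχ
  have hMC : ∀ w : ZMod p, ((M w : ℕ) : ℂ) = ∑ y : ZMod p, if y ^ 4 = w then (1:ℂ) else 0 := by
    intro w
    rw [hMdef]
    simp only [Finset.card_filter]
    push_cast
    rfl
  -- Step 1
  have step1 : ((N : ℕ) : ℂ) = ∑ x : ZMod p, ((M ((-c - a * x ^ 4) * b⁻¹) : ℕ) : ℂ) := by
    have e1 : ∀ x y : ZMod p,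
        (a * x ^ 4 + b * y ^ 4 + c = 0) ↔ (y ^ 4 = (-c - a * x ^ 4) * b⁻¹) := by
      intro x y
      constructor
      · intro h
        linear_combination b⁻¹ * h - y ^ 4 * hbb
      · intro h
        linear_combination b * h - (c + a * x ^ 4) * hbb
    rw [hNdef]
    rw [Finset.card_filter]
    push_cast
    rw [Fintype.sum_prod_type]
    refine Finset.sum_congr rfl fun x _ => ?_
    rw [hMC]
    refine Finset.sum_congr rfl fun y _ => ?_
    rw [if_congr (e1 x y) rfl rfl]
  -- Step 2 : fiberwise sums
  have fib : ∀ f : ZMod p → ℂ,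
      ∑ x : ZMod p, f (x ^ 4) = ∑ u : ZMod p, ((M u : ℕ) : ℂ) * f u := by
    intro f
    rw [eq_comm]
    calc ∑ u : ZMod p, ((M u : ℕ) : ℂ) * f u
        = ∑ u : ZMod p, ∑ x ∈ ({x : ZMod p | x ^ 4 = u} : Finset (ZMod p)), f u := by
          refine Finset.sum_congr rfl fun u _ => ?_
          rw [Finset.sum_const, nsmul_eq_mul]
      _ = ∑ x : ZMod p, f (x ^ 4) := by
          have := Finset.sum_fiberwise_eq_sum_filter' (univ : Finset (ZMod p))
            (univ : Finset (ZMod p)) (fun x : ZMod p => x ^ 4) f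
          simpa using this
  -- Step 4 : Jacobi sums
  have jac : ∀ i j : ℕ,
      ∑ u : ZMod p, (χ ^ i) u * (χ ^ j) ((-c - a * u) * b⁻¹) = A i * B j * J i j := by
    intro i j
    have harg : ∀ t : ZMod p, (-c - a * ((-c * a⁻¹) * t)) * b⁻¹ = (-c * b⁻¹) * (1 - t) := by
      intro t
      linear_combination b⁻¹ * c * t * haa
    have hre : ∑ u : ZMod p, (χ ^ i) u * (χ ^ j) ((-c - a * u) * b⁻¹)
        = ∑ t : ZMod p, (χ ^ i) ((-c * a⁻¹) * t) * (χ ^ j) ((-c - a * ((-c * a⁻¹) * t)) * b⁻¹) :=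
      (Fintype.sum_equiv (Equiv.mulLeft₀ (-c * a⁻¹) hca)
        (fun t => (χ ^ i) ((-c * a⁻¹) * t) * (χ ^ j) ((-c - a * ((-c * a⁻¹) * t)) * b⁻¹))
        (fun u => (χ ^ i) u * (χ ^ j) ((-c - a * u) * b⁻¹)) (fun t => rfl)).symm
    rw [hre]
    have : ∀ t : ZMod p, (χ ^ i) ((-c * a⁻¹) * t) * (χ ^ j) ((-c - a * ((-c * a⁻¹) * t)) * b⁻¹)
        = A i * B j * ((χ ^ i) t * (χ ^ j) (1 - t)) := by
      intro t
      rw [harg t, map_mul (χ ^ i) (-c * a⁻¹) t, map_mul (χ ^ j) (-c * b⁻¹) (1 - t)]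
      ring
    rw [Finset.sum_congr rfl fun t _ => this t, ← Finset.mul_sum]
    rfl
  -- Step 5 : putting it together
  have main : ((N : ℕ) : ℂ) = ((M (-c * a⁻¹) : ℕ) : ℂ) + (∑ j ∈ Finset.range 4, B j)
      + ∑ j ∈ Finset.range 4, ∑ i ∈ Finset.range 4, A i * B j * J i j := by
    have e2 : ∀ x : ZMod p, ((-c - a * x ^ 4) * b⁻¹ = 0) ↔ (x ^ 4 = -c * a⁻¹) := by
      intro x
      constructor
      · intro h
        linear_combination (-b * a⁻¹) * h - a⁻¹ * (c + a * x ^ 4) * hbb - x ^ 4 * haa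
      · intro h
        linear_combination (-a * b⁻¹) * h + b⁻¹ * c * haa
    calc ((N : ℕ) : ℂ) = ∑ x : ZMod p, ((M ((-c - a * x ^ 4) * b⁻¹) : ℕ) : ℂ) := step1
      _ = ∑ x : ZMod p, ((if (-c - a * x ^ 4) * b⁻¹ = 0 then (1:ℂ) else 0)
            + ∑ j ∈ Finset.range 4, (χ ^ j) ((-c - a * x ^ 4) * b⁻¹)) := by
          exact Finset.sum_congr rfl fun x _ => hcount _
      _ = (∑ x : ZMod p, if (-c - a * x ^ 4) * b⁻¹ = 0 then (1:ℂ) else 0)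
            + ∑ x : ZMod p, ∑ j ∈ Finset.range 4, (χ ^ j) ((-c - a * x ^ 4) * b⁻¹) :=
          Finset.sum_add_distrib
      _ = ((M (-c * a⁻¹) : ℕ) : ℂ)
            + ∑ j ∈ Finset.range 4, ∑ x : ZMod p, (χ ^ j) ((-c - a * x ^ 4) * b⁻¹) := by
          rw [Finset.sum_comm]
          congr 1
          rw [hMC]
          exact Finset.sum_congr rfl fun x _ => if_congr (e2 x) rfl rfl
      _ = ((M (-c * a⁻¹) : ℕ) : ℂ) + ∑ j ∈ Finset.range 4,
            (B j + ∑ i ∈ Finset.range 4, A i * B j * J i j) := by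
          congr 1
          refine Finset.sum_congr rfl fun j _ => ?_
          rw [fib (fun u => (χ ^ j) ((-c - a * u) * b⁻¹))]
          calc ∑ u : ZMod p, ((M u : ℕ) : ℂ) * (χ ^ j) ((-c - a * u) * b⁻¹)
              = ∑ u : ZMod p, ((if u = 0 then (1:ℂ) else 0) * (χ ^ j) ((-c - a * u) * b⁻¹)
                + ∑ i ∈ Finset.range 4, (χ ^ i) u * (χ ^ j) ((-c - a * u) * b⁻¹)) := by
                refine Finset.sum_congr rfl fun u _ => ?_
                rw [hcount u, add_mul, Finset.sum_mul]
            _ = (∑ u : ZMod p, (if u = 0 then (1:ℂ) else 0) * (χ ^ j) ((-c - a * u) * b⁻¹))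
                + ∑ i ∈ Finset.range 4, ∑ u : ZMod p, (χ ^ i) u * (χ ^ j) ((-c - a * u) * b⁻¹) := by
                rw [Finset.sum_add_distrib, Finset.sum_comm]
            _ = B j + ∑ i ∈ Finset.range 4, A i * B j * J i j := by
                congr 1
                · calc ∑ u : ZMod p, (if u = 0 then (1:ℂ) else 0) * (χ ^ j) ((-c - a * u) * b⁻¹)
                      = ∑ u : ZMod p,
                        (if u = 0 then (χ ^ j) ((-c - a * u) * b⁻¹) else 0) := by
                        refine Finset.sum_congr rfl fun u _ => ?_
                        split <;> simp
                    _ = (χ ^ j) ((-c - a * 0) * b⁻¹) := by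
                        rw [Finset.sum_ite_eq' univ (0 : ZMod p)
                          (fun u => (χ ^ j) ((-c - a * u) * b⁻¹))]
                        simp
                    _ = B j := by
                        rw [hBdef]
                        congr 1
                        ring
                · exact Finset.sum_congr rfl fun i _ => jac i j
      _ = _ := by rw [Finset.sum_add_distrib, add_assoc]
  -- special values
  have hA0 : A 0 = 1 := by
    show (χ ^ 0) (-c * a⁻¹) = 1
    rw [pow_zero]
    exact MulChar.one_apply (isUnit_iff_ne_zero.mpr hca)
  have hB0 : B 0 = 1 := by
    show (χ ^ 0) (-c * b⁻¹) = 1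
    rw [pow_zero]
    exact MulChar.one_apply (isUnit_iff_ne_zero.mpr hcb)
  have hMa : ((M (-c * a⁻¹) : ℕ) : ℂ) = A 0 + A 1 + A 2 + A 3 := by
    have h := hcount (-c * a⁻¹)
    rw [if_neg hca, zero_add] at h
    simp only [Finset.sum_range_succ, Finset.sum_range_zero, zero_add] at h
    exact h
  have hBsum : ∑ j ∈ Finset.range 4, B j = B 0 + B 1 + B 2 + B 3 := by
    simp only [Finset.sum_range_succ, Finset.sum_range_zero, zero_add]
  have hJ00 : J 0 0 = (p : ℂ) - 2 := by
    show jacobiSum (χ ^ 0) (χ ^ 0) = (p : ℂ) - 2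
    rw [pow_zero, jacobiSum_one_one, ZMod.card]
  have hJ0 : ∀ j : ℕ, ¬ (4 ∣ j) → J 0 j = -1 := by
    intro j hj
    show jacobiSum (χ ^ 0) (χ ^ j) = -1
    rw [pow_zero]
    exact jacobiSum_one_nontrivial (hpow_ne j hj)
  have hJi0 : ∀ i : ℕ, ¬ (4 ∣ i) → J i 0 = -1 := by
    intro i hi
    show jacobiSum (χ ^ i) (χ ^ 0) = -1
    rw [pow_zero, jacobiSum_comm]
    exact jacobiSum_one_nontrivial (hpow_ne i hi)
  have hJinv : ∀ i j : ℕ, ¬ (4 ∣ i) → i + j = 4 → ‖J i j‖ = 1 := by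
    intro i j hi hij
    show ‖jacobiSum (χ ^ i) (χ ^ j)‖ = 1
    have hmul : (χ ^ i) * (χ ^ j) = 1 := by rw [← pow_add, hij, h4]
    have hji : (χ ^ j) = (χ ^ i)⁻¹ := (inv_eq_of_mul_eq_one_right hmul).symm
    rw [hji, jacobiSum_nontrivial_inv (hpow_ne i hi), norm_neg]
    exact mulChar_norm_one (χ ^ i) (neg_ne_zero.mpr one_ne_zero)
  have hJgen : ∀ i j : ℕ, ¬ (4 ∣ i) → ¬ (4 ∣ j) → ¬ (4 ∣ (i + j)) →
      ‖J i j‖ = Real.sqrt p := by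
    intro i j hi hj hij
    show ‖jacobiSum (χ ^ i) (χ ^ j)‖ = Real.sqrt p
    refine jacobi_norm (hpow_ne i hi) (hpow_ne j hj) ?_
    rw [← pow_add]
    exact hpow_ne _ hij
  have hAB : ∀ i j : ℕ, ‖A i * B j * J i j‖ ≤ ‖J i j‖ := by
    intro i j
    have e : A i * B j * J i j = (χ ^ i) (-c * a⁻¹) * (χ ^ j) (-c * b⁻¹) * J i j := rfl
    rw [e, norm_mul, norm_mul]
    have h1 := mulChar_norm_le_one (χ ^ i) (-c * a⁻¹)
    have h2 := mulChar_norm_le_one (χ ^ j) (-c * b⁻¹)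
    have h3 := norm_nonneg (J i j)
    have h4 := norm_nonneg ((χ ^ i) (-c * a⁻¹))
    have h5 := norm_nonneg ((χ ^ j) (-c * b⁻¹))
    have hxy : ‖(χ ^ i) (-c * a⁻¹)‖ * ‖(χ ^ j) (-c * b⁻¹)‖ ≤ 1 := by nlinarith
    calc ‖(χ ^ i) (-c * a⁻¹)‖ * ‖(χ ^ j) (-c * b⁻¹)‖ * ‖J i j‖
        ≤ 1 * ‖J i j‖ := mul_le_mul_of_nonneg_right hxy h3
      _ = ‖J i j‖ := one_mul _
  -- the key identity
  have key : ((N : ℕ) : ℂ) = (p : ℂ)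
      + ((A 1 * B 3 * J 1 3 + A 2 * B 2 * J 2 2 + A 3 * B 1 * J 3 1)
        + (A 1 * B 1 * J 1 1 + A 1 * B 2 * J 1 2 + A 2 * B 1 * J 2 1
          + A 2 * B 3 * J 2 3 + A 3 * B 2 * J 3 2 + A 3 * B 3 * J 3 3)) := by
    rw [main, hMa, hBsum]
    simp only [Finset.sum_range_succ, Finset.sum_range_zero, zero_add]
    rw [hJ00, hJ0 1 (by norm_num), hJ0 2 (by norm_num), hJ0 3 (by norm_num),
      hJi0 1 (by norm_num), hJi0 2 (by norm_num), hJi0 3 (by norm_num), hA0, hB0]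
    ring
  -- norm bound
  have sqp_nonneg : (0:ℝ) ≤ Real.sqrt p := Real.sqrt_nonneg _
  have hTbound : ‖((N : ℕ) : ℂ) - (p : ℂ)‖ ≤ 3 + 6 * Real.sqrt p := by
    rw [key, add_sub_cancel_left]
    have b13 : ‖A 1 * B 3 * J 1 3‖ ≤ 1 :=
      le_trans (hAB 1 3) (le_of_eq (hJinv 1 3 (by norm_num) (by norm_num)))
    have b22 : ‖A 2 * B 2 * J 2 2‖ ≤ 1 :=
      le_trans (hAB 2 2) (le_of_eq (hJinv 2 2 (by norm_num) (by norm_num)))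
    have b31 : ‖A 3 * B 1 * J 3 1‖ ≤ 1 :=
      le_trans (hAB 3 1) (le_of_eq (hJinv 3 1 (by norm_num) (by norm_num)))
    have g11 : ‖A 1 * B 1 * J 1 1‖ ≤ Real.sqrt p :=
      le_trans (hAB 1 1) (le_of_eq (hJgen 1 1 (by norm_num) (by norm_num) (by norm_num)))
    have g12 : ‖A 1 * B 2 * J 1 2‖ ≤ Real.sqrt p :=
      le_trans (hAB 1 2) (le_of_eq (hJgen 1 2 (by norm_num) (by norm_num) (by norm_num)))
    have g21 : ‖A 2 * B 1 * J 2 1‖ ≤ Real.sqrt p :=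
      le_trans (hAB 2 1) (le_of_eq (hJgen 2 1 (by norm_num) (by norm_num) (by norm_num)))
    have g23 : ‖A 2 * B 3 * J 2 3‖ ≤ Real.sqrt p :=
      le_trans (hAB 2 3) (le_of_eq (hJgen 2 3 (by norm_num) (by norm_num) (by norm_num)))
    have g32 : ‖A 3 * B 2 * J 3 2‖ ≤ Real.sqrt p :=
      le_trans (hAB 3 2) (le_of_eq (hJgen 3 2 (by norm_num) (by norm_num) (by norm_num)))
    have g33 : ‖A 3 * B 3 * J 3 3‖ ≤ Real.sqrt p :=
      le_trans (hAB 3 3) (le_of_eq (hJgen 3 3 (by norm_num) (by norm_num) (by norm_num)))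
    have tri3 : ∀ x y z : ℂ, ‖x + y + z‖ ≤ ‖x‖ + ‖y‖ + ‖z‖ := fun x y z =>
      le_trans (norm_add_le _ _) (add_le_add_left (norm_add_le _ _) _)
    have tri6 : ∀ x1 x2 x3 x4 x5 x6 : ℂ,
        ‖x1 + x2 + x3 + x4 + x5 + x6‖ ≤ ‖x1‖ + ‖x2‖ + ‖x3‖ + ‖x4‖ + ‖x5‖ + ‖x6‖ := by
      intro x1 x2 x3 x4 x5 x6
      calc ‖x1 + x2 + x3 + x4 + x5 + x6‖
          ≤ ‖x1 + x2 + x3 + x4 + x5‖ + ‖x6‖ := norm_add_le _ _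
        _ ≤ (‖x1 + x2 + x3 + x4‖ + ‖x5‖) + ‖x6‖ :=
            add_le_add_left (norm_add_le _ _) _
        _ ≤ ((‖x1 + x2 + x3‖ + ‖x4‖) + ‖x5‖) + ‖x6‖ :=
            add_le_add_left (add_le_add_left (norm_add_le _ _) _) _
        _ ≤ (((‖x1 + x2‖ + ‖x3‖) + ‖x4‖) + ‖x5‖) + ‖x6‖ :=
            add_le_add_left (add_le_add_left (add_le_add_left (norm_add_le _ _) _) _) _
        _ ≤ ‖x1‖ + ‖x2‖ + ‖x3‖ + ‖x4‖ + ‖x5‖ + ‖x6‖ := by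
            have := norm_add_le x1 x2
            linarith
    refine le_trans (norm_add_le _ _) ?_
    have hfirst := tri3 (A 1 * B 3 * J 1 3) (A 2 * B 2 * J 2 2) (A 3 * B 1 * J 3 1)
    have hsecond := tri6 (A 1 * B 1 * J 1 1) (A 1 * B 2 * J 1 2) (A 2 * B 1 * J 2 1)
      (A 2 * B 3 * J 2 3) (A 3 * B 2 * J 3 2) (A 3 * B 3 * J 3 3)
    linarith
  -- numerics
  have hp43R : (43 : ℝ) ≤ (p : ℝ) := by exact_mod_cast hp43
  have hsqlt : 3 + 6 * Real.sqrt p < (p : ℝ) := by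
    have h36 : (6 * Real.sqrt p) ^ 2 = 36 * (p : ℝ) := by
      rw [mul_pow, Real.sq_sqrt (by positivity : (0:ℝ) ≤ (p:ℝ))]
      ring
    have hlt : (6 * Real.sqrt p) ^ 2 < ((p : ℝ) - 3) ^ 2 := by
      rw [h36]
      nlinarith
    have h6 : 6 * Real.sqrt p < (p : ℝ) - 3 := by
      by_contra hcon
      push_neg at hcon
      nlinarith
    linarith
  have hN0 : N ≠ 0 := by
    intro h
    rw [h] at hTbound
    simp only [Nat.cast_zero, zero_sub, norm_neg, Complex.norm_natCast] at hTbound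
    linarith
  obtain ⟨z, hz⟩ := Finset.card_pos.mp (Nat.pos_of_ne_zero hN0)
  exact ⟨z.1, z.2, (Finset.mem_filter.mp hz).2⟩

/-- If `p ≥ 37` is prime, then any smooth plane diagonal quartic curve
`a·x⁴ + b·y⁴ + c·z⁴ = 0` with `a, b, c ∈ F_p^×` has a nonzero
`F_p`-rational point. -/
theorem stmt_13 (p : ℕ) (hp : p.Prime) (h37 : 37 ≤ p) (a b c : ZMod p)
    (ha : a ≠ 0) (hb : b ≠ 0) (hc : c ≠ 0) :
    ∃ x y z : ZMod p, ¬(x = 0 ∧ y = 0 ∧ z = 0) ∧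
      a * x ^ 4 + b * y ^ 4 + c * z ^ 4 = 0 := by
  haveI : Fact p.Prime := ⟨hp⟩
  have hmain : ∃ x y : ZMod p, a * x ^ 4 + b * y ^ 4 + c = 0 := by
    have hodd : p % 2 = 1 := Nat.odd_iff.mp (hp.odd_of_ne_two (by omega))
    have h2 : p % 4 = 1 ∨ p % 4 = 3 := by omega
    rcases h2 with h1 | h3
    · by_cases hp37 : p = 37
      · subst hp37
        exact case37 a b c ha hb hc
      by_cases hp41 : p = 41
      · subst hp41
        exact case41 a b c ha hb hc
      · have h43 : 43 ≤ p := by omega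
        exact key1 h43 h1 a b c ha hb hc
    · exact case3mod4 h3 a b c ha hb hc
  obtain ⟨x, y, hxy⟩ := hmain
  refine ⟨x, y, 1, ?_, by simpa using hxy⟩
  rintro ⟨-, -, h1⟩
  exact one_ne_zero h1
end

section
/- For every odd prime ℓ with 3 ≤ ℓ ≤ 19 and ℓ ≠ 5, and all a_0, a_1, a_2, a_3 ∈ F_ℓ^×, the equation a_0·x_0^4 + a_1·x_1^4 + a_2·x_2^4 + a_3·x_3^4 = 0 has a solution in F_ℓ^4 with not all coordinates zero. -/
set_option maxHeartbeats 4000000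
set_option maxRecDepth 8000

lemma quartic_assemble {ℓ : ℕ} [Fact (Nat.Prime ℓ)] (R : Finset (ZMod ℓ))
    (hrep : ∀ b : ZMod ℓ, b ≠ 0 → ∃ r ∈ R, ∃ t : ZMod ℓ, t ≠ 0 ∧ b = r * t ^ 4)
    (hsol : ∀ r0 ∈ R, ∀ r1 ∈ R, ∀ r2 ∈ R, ∀ r3 ∈ R, ∃ y0 y1 y2 : ZMod ℓ,
      r0 * y0 ^ 4 + r1 * y1 ^ 4 + r2 * y2 ^ 4 + r3 = 0)
    (a : Fin 4 → ZMod ℓ) (ha : ∀ i, a i ≠ 0) :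
    ∃ x : Fin 4 → ZMod ℓ, x ≠ 0 ∧
      a 0 * x 0 ^ 4 + a 1 * x 1 ^ 4 + a 2 * x 2 ^ 4 + a 3 * x 3 ^ 4 = 0 := by
  obtain ⟨r0, hr0, t0, ht0, he0⟩ := hrep (a 0) (ha 0)
  obtain ⟨r1, hr1, t1, ht1, he1⟩ := hrep (a 1) (ha 1)
  obtain ⟨r2, hr2, t2, ht2, he2⟩ := hrep (a 2) (ha 2)
  obtain ⟨r3, hr3, t3, ht3, he3⟩ := hrep (a 3) (ha 3)
  obtain ⟨y0, y1, y2, hy⟩ := hsol r0 hr0 r1 hr1 r2 hr2 r3 hr3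
  refine ⟨![y0 * t0⁻¹, y1 * t1⁻¹, y2 * t2⁻¹, t3⁻¹], ?_, ?_⟩
  · intro h
    have := congrFun h 3
    simp only [Matrix.cons_val_three] at this
    exact inv_ne_zero ht3 (by simpa using this)
  · have key : ∀ (t y : ZMod ℓ), t ≠ 0 → (y * t⁻¹) ^ 4 * t ^ 4 = y ^ 4 := by
      intro t y ht
      field_simp
    simp only [Matrix.cons_val_zero, Matrix.cons_val_one, Matrix.head_cons,
      Matrix.cons_val_two, Matrix.tail_cons, Matrix.cons_val_three]
    rw [he0, he1, he2, he3]
    calc r0 * t0 ^ 4 * (y0 * t0⁻¹) ^ 4 + r1 * t1 ^ 4 * (y1 * t1⁻¹) ^ 4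
          + r2 * t2 ^ 4 * (y2 * t2⁻¹) ^ 4 + r3 * t3 ^ 4 * (t3⁻¹) ^ 4
        = r0 * ((y0 * t0⁻¹) ^ 4 * t0 ^ 4) + r1 * ((y1 * t1⁻¹) ^ 4 * t1 ^ 4)
          + r2 * ((y2 * t2⁻¹) ^ 4 * t2 ^ 4) + r3 * ((1 * t3⁻¹) ^ 4 * t3 ^ 4) := by ring
      _ = r0 * y0 ^ 4 + r1 * y1 ^ 4 + r2 * y2 ^ 4 + r3 * 1 ^ 4 := by
          rw [key t0 y0 ht0, key t1 y1 ht1, key t2 y2 ht2, key t3 1 ht3]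
      _ = 0 := by rw [← hy]; ring


lemma rep_3 : ∀ b : ZMod 3, b ≠ 0 → ∃ r ∈ ({1, 2} : Finset (ZMod 3)), ∃ t : ZMod 3, t ≠ 0 ∧ b = r * t ^ 4 := by decide

lemma sol_3 : ∀ r0 ∈ ({1, 2} : Finset (ZMod 3)), ∀ r1 ∈ ({1, 2} : Finset (ZMod 3)), ∀ r2 ∈ ({1, 2} : Finset (ZMod 3)), ∀ r3 ∈ ({1, 2} : Finset (ZMod 3)), ∃ y0 y1 y2 : ZMod 3,
    r0 * y0 ^ 4 + r1 * y1 ^ 4 + r2 * y2 ^ 4 + r3 = 0 := by decide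

lemma rep_7 : ∀ b : ZMod 7, b ≠ 0 → ∃ r ∈ ({1, 3} : Finset (ZMod 7)), ∃ t : ZMod 7, t ≠ 0 ∧ b = r * t ^ 4 := by decide

lemma sol_7 : ∀ r0 ∈ ({1, 3} : Finset (ZMod 7)), ∀ r1 ∈ ({1, 3} : Finset (ZMod 7)), ∀ r2 ∈ ({1, 3} : Finset (ZMod 7)), ∀ r3 ∈ ({1, 3} : Finset (ZMod 7)), ∃ y0 y1 y2 : ZMod 7,
    r0 * y0 ^ 4 + r1 * y1 ^ 4 + r2 * y2 ^ 4 + r3 = 0 := by decide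

lemma rep_11 : ∀ b : ZMod 11, b ≠ 0 → ∃ r ∈ ({1, 2} : Finset (ZMod 11)), ∃ t : ZMod 11, t ≠ 0 ∧ b = r * t ^ 4 := by decide

lemma sol_11 : ∀ r0 ∈ ({1, 2} : Finset (ZMod 11)), ∀ r1 ∈ ({1, 2} : Finset (ZMod 11)), ∀ r2 ∈ ({1, 2} : Finset (ZMod 11)), ∀ r3 ∈ ({1, 2} : Finset (ZMod 11)), ∃ y0 y1 y2 : ZMod 11,
    r0 * y0 ^ 4 + r1 * y1 ^ 4 + r2 * y2 ^ 4 + r3 = 0 := by decide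

lemma rep_13 : ∀ b : ZMod 13, b ≠ 0 → ∃ r ∈ ({1, 2, 4, 8} : Finset (ZMod 13)), ∃ t : ZMod 13, t ≠ 0 ∧ b = r * t ^ 4 := by decide

lemma sol_13 : ∀ r0 ∈ ({1, 2, 4, 8} : Finset (ZMod 13)), ∀ r1 ∈ ({1, 2, 4, 8} : Finset (ZMod 13)), ∀ r2 ∈ ({1, 2, 4, 8} : Finset (ZMod 13)), ∀ r3 ∈ ({1, 2, 4, 8} : Finset (ZMod 13)), ∃ y0 y1 y2 : ZMod 13,
    r0 * y0 ^ 4 + r1 * y1 ^ 4 + r2 * y2 ^ 4 + r3 = 0 := by decide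

lemma rep_17 : ∀ b : ZMod 17, b ≠ 0 → ∃ r ∈ ({1, 3, 9, 10} : Finset (ZMod 17)), ∃ t : ZMod 17, t ≠ 0 ∧ b = r * t ^ 4 := by decide

lemma sol_17 : ∀ r0 ∈ ({1, 3, 9, 10} : Finset (ZMod 17)), ∀ r1 ∈ ({1, 3, 9, 10} : Finset (ZMod 17)), ∀ r2 ∈ ({1, 3, 9, 10} : Finset (ZMod 17)), ∀ r3 ∈ ({1, 3, 9, 10} : Finset (ZMod 17)), ∃ y0 y1 y2 : ZMod 17,
    r0 * y0 ^ 4 + r1 * y1 ^ 4 + r2 * y2 ^ 4 + r3 = 0 := by decide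

lemma rep_19 : ∀ b : ZMod 19, b ≠ 0 → ∃ r ∈ ({1, 2} : Finset (ZMod 19)), ∃ t : ZMod 19, t ≠ 0 ∧ b = r * t ^ 4 := by decide

lemma sol_19 : ∀ r0 ∈ ({1, 2} : Finset (ZMod 19)), ∀ r1 ∈ ({1, 2} : Finset (ZMod 19)), ∀ r2 ∈ ({1, 2} : Finset (ZMod 19)), ∀ r3 ∈ ({1, 2} : Finset (ZMod 19)), ∃ y0 y1 y2 : ZMod 19,
    r0 * y0 ^ 4 + r1 * y1 ^ 4 + r2 * y2 ^ 4 + r3 = 0 := by decide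

/-- For every odd prime `ℓ` with `3 ≤ ℓ ≤ 19` and `ℓ ≠ 5`, and all nonzero
`a₀, a₁, a₂, a₃ ∈ F_ℓ`, the diagonal quartic
`a₀x₀⁴ + a₁x₁⁴ + a₂x₂⁴ + a₃x₃⁴ = 0` has a nonzero solution over `F_ℓ`. -/
theorem stmt_15 (ℓ : ℕ) (hℓ : ℓ.Prime) (hodd : Odd ℓ) (h3 : 3 ≤ ℓ) (h19 : ℓ ≤ 19)
    (h5 : ℓ ≠ 5) (a : Fin 4 → ZMod ℓ) (ha : ∀ i, a i ≠ 0) :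
    ∃ x : Fin 4 → ZMod ℓ, x ≠ 0 ∧
      a 0 * x 0 ^ 4 + a 1 * x 1 ^ 4 + a 2 * x 2 ^ 4 + a 3 * x 3 ^ 4 = 0 := by
  have : Fact (Nat.Prime ℓ) := ⟨hℓ⟩
  interval_cases ℓ
  · exact quartic_assemble _ rep_3 sol_3 a ha
  · exact absurd hℓ (by norm_num)
  · exact absurd h5 (by norm_num)
  · exact absurd hℓ (by norm_num)
  · exact quartic_assemble _ rep_7 sol_7 a ha
  · exact absurd hℓ (by norm_num)
  · exact absurd hℓ (by norm_num)
  · exact absurd hℓ (by norm_num)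
  · exact quartic_assemble _ rep_11 sol_11 a ha
  · exact absurd hℓ (by norm_num)
  · exact quartic_assemble _ rep_13 sol_13 a ha
  · exact absurd hℓ (by norm_num)
  · exact absurd hℓ (by norm_num)
  · exact absurd hℓ (by norm_num)
  · exact quartic_assemble _ rep_17 sol_17 a ha
  · exact absurd hℓ (by norm_num)
  · exact quartic_assemble _ rep_19 sol_19 a ha
end

section
/- Let p be an odd prime and P = [y_1 : y_2 : y_3] a point on the smooth conic Z : a_1·Y_1^2 + a_2·Y_2^2 + a_3·Y_3^2 = 0 over F_p with a_1 a_2 a_3 ≠ 0 and y_1 y_2 y_3 ≠ 0. Then the four points [±α : ±β : ±γ] of the plane quartic C : a_1·X_1^4 + a_2·X_2^4 + a_3·X_3^4 = 0 over the algebraic closure, where α^2 = y_1, β^2 = y_2, γ^2 = y_3 (with fixed choices of square roots and all four sign combinations up to overall sign), are pairwise distinct and no three of them are collinear; in particular they are not the intersection of C with a line. -/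
lemma li3 {K : Type*} [Field K] (u v w : Fin 3 → K)
    (h : (Matrix.of ![u, v, w]).det ≠ 0) : LinearIndependent K ![u, v, w] := by
  have := Matrix.linearIndependent_rows_iff_isUnit (K := K) (A := Matrix.of ![u, v, w])
  rw [Matrix.isUnit_iff_isUnit_det _, isUnit_iff_ne_zero] at this
  exact this.mpr h

set_option maxHeartbeats 1000000 in
/-- Let `p` be an odd prime and `P = [y₁ : y₂ : y₃]` a point with all
coordinates nonzero on the smooth conic `Z : a₁Y₁² + a₂Y₂² + a₃Y₃² = 0` over
`F_p` (with `a₁a₂a₃ ≠ 0`).  Let `α, β, γ` be square roots of `y₁, y₂, y₃` in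
an algebraic closure `K` of `F_p`.  Then the four points `[±α : ±β : γ]` lie
on the quartic `C : a₁X₁⁴ + a₂X₂⁴ + a₃X₃⁴ = 0`, are pairwise distinct as
projective points, no three of them are collinear, and in particular they are
not the intersection of `C` with a line. -/
theorem stmt_17 (p : ℕ) [Fact p.Prime] (hodd : Odd p)
    (a₁ a₂ a₃ y₁ y₂ y₃ : ZMod p)
    (ha : a₁ * a₂ * a₃ ≠ 0) (hy : y₁ * y₂ * y₃ ≠ 0)
    (hP : a₁ * y₁ ^ 2 + a₂ * y₂ ^ 2 + a₃ * y₃ ^ 2 = 0)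
    (α β γ : AlgebraicClosure (ZMod p))
    (hα : α ^ 2 = algebraMap (ZMod p) (AlgebraicClosure (ZMod p)) y₁)
    (hβ : β ^ 2 = algebraMap (ZMod p) (AlgebraicClosure (ZMod p)) y₂)
    (hγ : γ ^ 2 = algebraMap (ZMod p) (AlgebraicClosure (ZMod p)) y₃)
    (v : Fin 4 → Fin 3 → AlgebraicClosure (ZMod p))
    (hv : v = ![![α, β, γ], ![α, -β, γ], ![-α, β, γ], ![-α, -β, γ]]) :
    (∀ i, algebraMap (ZMod p) _ a₁ * v i 0 ^ 4 +
        algebraMap (ZMod p) _ a₂ * v i 1 ^ 4 +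
        algebraMap (ZMod p) _ a₃ * v i 2 ^ 4 = 0) ∧
    (∀ i j, i ≠ j → ∀ t : AlgebraicClosure (ZMod p), t • v i ≠ v j) ∧
    (∀ i j k, i ≠ j → i ≠ k → j ≠ k →
      LinearIndependent (AlgebraicClosure (ZMod p)) ![v i, v j, v k]) ∧
    ¬ ∃ l : Fin 3 → AlgebraicClosure (ZMod p), l ≠ 0 ∧
        ∀ i, l 0 * v i 0 + l 1 * v i 1 + l 2 * v i 2 = 0 := by
  have hFinj : Function.Injective (algebraMap (ZMod p) (AlgebraicClosure (ZMod p))) :=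
    (algebraMap (ZMod p) (AlgebraicClosure (ZMod p))).injective
  set F := algebraMap (ZMod p) (AlgebraicClosure (ZMod p)) with hF
  have hy1 : y₁ ≠ 0 := left_ne_zero_of_mul (left_ne_zero_of_mul hy)
  have hy2 : y₂ ≠ 0 := right_ne_zero_of_mul (left_ne_zero_of_mul hy)
  have hy3 : y₃ ≠ 0 := right_ne_zero_of_mul hy
  have hα0 : α ≠ 0 := by
    intro h; exact hy1 (hFinj (by rw [map_zero, ← hα, h]; ring))
  have hβ0 : β ≠ 0 := by
    intro h; exact hy2 (hFinj (by rw [map_zero, ← hβ, h]; ring))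
  have hγ0 : γ ≠ 0 := by
    intro h; exact hy3 (hFinj (by rw [map_zero, ← hγ, h]; ring))
  have hp2 : p ≠ 2 := by rintro rfl; exact (by decide : ¬ Odd 2) hodd
  have h2z : (2 : ZMod p) ≠ 0 := by
    intro h
    have := (CharP.cast_eq_zero_iff (ZMod p) p 2).mp (by exact_mod_cast h)
    exact hp2 ((Nat.prime_dvd_prime_iff_eq (Fact.out) Nat.prime_two).mp this)
  have h2 : (2 : AlgebraicClosure (ZMod p)) ≠ 0 := by
    intro h; exact h2z (hFinj (by rw [map_ofNat, map_zero, h]))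
  have h4 : (4 : AlgebraicClosure (ZMod p)) ≠ 0 := by
    intro h
    apply h2
    have h22 : (2 : AlgebraicClosure (ZMod p)) * 2 = 0 := by rw [← h]; norm_num
    rcases mul_eq_zero.mp h22 with h'|h' <;> exact h'
  have main : F a₁ * (F y₁) ^ 2 + F a₂ * (F y₂) ^ 2 + F a₃ * (F y₃) ^ 2 = 0 := by
    rw [← map_pow, ← map_pow, ← map_pow, ← map_mul, ← map_mul, ← map_mul,
      ← map_add, ← map_add, hP, map_zero]
  subst hv
  refine ⟨?_, ?_, ?_, ?_⟩
  · intro i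
    fin_cases i <;>
      simp only [Fin.reduceFinMk, Fin.isValue, Matrix.cons_val_zero, Matrix.cons_val_one,
        Matrix.cons_val_two, Matrix.cons_val_three, Matrix.head_cons, Matrix.tail_cons] <;>
      linear_combination main + F a₁ * (α^2 + F y₁) * hα + F a₂ * (β^2 + F y₂) * hβ +
        F a₃ * (γ^2 + F y₃) * hγ
  · intro i j hij t h
    have h0 := congrFun h 0
    have h1 := congrFun h 1
    have h2' := congrFun h 2
    fin_cases i <;> fin_cases j <;>
      simp only [Fin.reduceFinMk, Fin.isValue, Pi.smul_apply, smul_eq_mul,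
        Matrix.cons_val_zero, Matrix.cons_val_one, Matrix.cons_val_two, Matrix.cons_val_three,
        Matrix.head_cons, Matrix.tail_cons] at h0 h1 h2' hij ⊢ <;>
      first
        | exact hij rfl
        | exact (mul_ne_zero (mul_ne_zero h2 hα0) hγ0) (by linear_combination γ * h0 - α * h2')
        | exact (mul_ne_zero (mul_ne_zero h2 hα0) hγ0) (by linear_combination - γ * h0 - α * h2')
        | exact (mul_ne_zero (mul_ne_zero h2 hβ0) hγ0) (by linear_combination γ * h1 - β * h2')
        | exact (mul_ne_zero (mul_ne_zero h2 hβ0) hγ0) (by linear_combination - γ * h1 - β * h2')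
  · intro i j k hij hik hjk
    fin_cases i <;> fin_cases j <;> fin_cases k <;>
      simp only [Fin.reduceFinMk, Fin.isValue, Matrix.cons_val_zero, Matrix.cons_val_one,
        Matrix.cons_val_two, Matrix.cons_val_three, Matrix.head_cons, Matrix.tail_cons,
        ne_eq] at hij hik hjk ⊢ <;>
      first
        | exact absurd trivial hij
        | exact absurd trivial hik
        | exact absurd trivial hjk
        | exact absurd rfl hij
        | exact absurd rfl hik
        | exact absurd rfl hjk
        | · apply li3
            rw [Matrix.det_fin_three]
            simp only [Matrix.of_apply, Fin.isValue, Matrix.cons_val_zero, Matrix.cons_val_one,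
              Matrix.cons_val_two, Matrix.head_cons, Matrix.tail_cons]
            intro hdet
            apply mul_ne_zero (mul_ne_zero (mul_ne_zero h4 hα0) hβ0) hγ0
            first
              | linear_combination hdet
              | linear_combination - hdet
  · rintro ⟨l, hl, hall⟩
    have h0 := hall 0
    have h1 := hall 1
    have h2' := hall 2
    simp only [Fin.isValue, Matrix.cons_val_zero, Matrix.cons_val_one,
      Matrix.cons_val_two, Matrix.head_cons, Matrix.tail_cons] at h0 h1 h2'
    have hl1 : l 1 = 0 := by
      have hx : (2 : AlgebraicClosure (ZMod p)) * (l 1 * β) = 0 := by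
        linear_combination h0 - h1
      rcases mul_eq_zero.mp hx with h|h
      · exact absurd h h2
      · rcases mul_eq_zero.mp h with h|h
        · exact h
        · exact absurd h hβ0
    have hl0 : l 0 = 0 := by
      have hx : (2 : AlgebraicClosure (ZMod p)) * (l 0 * α) = 0 := by
        linear_combination h0 - h2'
      rcases mul_eq_zero.mp hx with h|h
      · exact absurd h h2
      · rcases mul_eq_zero.mp h with h|h
        · exact h
        · exact absurd h hα0
    have hl2 : l 2 = 0 := by
      have hx : l 2 * γ = 0 := by linear_combination h0 - β * hl1 - α * hl0
      rcases mul_eq_zero.mp hx with h|h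
      · exact h
      · exact absurd h hγ0
    apply hl
    funext x
    fin_cases x
    · simpa using hl0
    · simpa using hl1
    · simpa using hl2
end
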